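/- Let L₁, L₂ > 0 and let u, v, r : ℝ × ℝ × ℝ → ℝ, written as functions of (x,y,t), with u twice continuously differentiable and v, r continuously differentiable, satisfying at every point: ∂ₜu = v, ∂ₜv = ∂ₓₓu + ∂ᵧᵧu − b(u)·r, ∂ₜr = (1/2)·b(u)·v, and suppose u, v, r are all spatially periodic with periods L₁ in x and L₂ in y. Then the modified global energy E(t) = ∫_{[0,L₁]×[0,L₂]} (1/2)( v² + (∂ₓu)² + (∂ᵧu)² + 2r² ) dx dy is constant in t. -/

import Mathlib

open Real

/-- Partial derivative in the first coordinate `x`. -/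
noncomputable def px (u : ℝ × ℝ × ℝ → ℝ) : ℝ × ℝ × ℝ → ℝ :=
  fun p => deriv (fun s => u (s, p.2.1, p.2.2)) p.1

/-- Partial derivative in the second coordinate `y`. -/
noncomputable def py (u : ℝ × ℝ × ℝ → ℝ) : ℝ × ℝ × ℝ → ℝ :=
  fun p => deriv (fun s => u (p.1, s, p.2.2)) p.2.1

/-- Partial derivative in the third coordinate `t`. -/
noncomputable def pt (u : ℝ × ℝ × ℝ → ℝ) : ℝ × ℝ × ℝ → ℝ :=
  fun p => deriv (fun s => u (p.1, p.2.1, s)) p.2.2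

/-- The function `b(x) = sin x / √(2 - cos x)`. -/
noncomputable def b (x : ℝ) : ℝ := Real.sin x / Real.sqrt (2 - Real.cos x)

/-- Spatial periodicity with periods `L₁` in `x` and `L₂` in `y`. -/
def SpatiallyPeriodic (L₁ L₂ : ℝ) (w : ℝ × ℝ × ℝ → ℝ) : Prop :=
  ∀ x y t : ℝ, w (x + L₁, y, t) = w (x, y, t) ∧ w (x, y + L₂, t) = w (x, y, t)

section Helpers

open MeasureTheory intervalIntegral

lemma hasDerivAt_lx (y t x : ℝ) : HasDerivAt (fun s : ℝ => (s, y, t)) ((1:ℝ),(0:ℝ),(0:ℝ)) x :=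
  HasDerivAt.prodMk (hasDerivAt_id x) (HasDerivAt.prodMk (hasDerivAt_const x y) (hasDerivAt_const x t))
lemma hasDerivAt_ly (x t y : ℝ) : HasDerivAt (fun s : ℝ => (x, s, t)) ((0:ℝ),(1:ℝ),(0:ℝ)) y :=
  HasDerivAt.prodMk (hasDerivAt_const y x) (HasDerivAt.prodMk (hasDerivAt_id y) (hasDerivAt_const y t))
lemma hasDerivAt_lt (x y t : ℝ) : HasDerivAt (fun s : ℝ => (x, y, s)) ((0:ℝ),(0:ℝ),(1:ℝ)) t :=
  HasDerivAt.prodMk (hasDerivAt_const t x) (HasDerivAt.prodMk (hasDerivAt_const t y) (hasDerivAt_id t))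

lemma px_hasDerivAt' {u : ℝ × ℝ × ℝ → ℝ} {p : ℝ × ℝ × ℝ} (hu : DifferentiableAt ℝ u p) :
    HasDerivAt (fun s => u (s, p.2.1, p.2.2)) (fderiv ℝ u p (1,0,0)) p.1 := by
  have := (hu.hasFDerivAt.comp_hasDerivAt p.1 (by simpa using hasDerivAt_lx p.2.1 p.2.2 p.1))
  exact this

lemma px_eq {u : ℝ × ℝ × ℝ → ℝ} {p : ℝ × ℝ × ℝ} (hu : DifferentiableAt ℝ u p) :
    px u p = fderiv ℝ u p (1,0,0) := (px_hasDerivAt' hu).deriv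

lemma px_slice_hasDerivAt {u : ℝ × ℝ × ℝ → ℝ} {p : ℝ × ℝ × ℝ} (hu : DifferentiableAt ℝ u p) :
    HasDerivAt (fun s => u (s, p.2.1, p.2.2)) (px u p) p.1 := by
  have := px_hasDerivAt' hu; rwa [← px_eq hu] at this

lemma py_hasDerivAt' {u : ℝ × ℝ × ℝ → ℝ} {p : ℝ × ℝ × ℝ} (hu : DifferentiableAt ℝ u p) :
    HasDerivAt (fun s => u (p.1, s, p.2.2)) (fderiv ℝ u p (0,1,0)) p.2.1 := by
  have := (hu.hasFDerivAt.comp_hasDerivAt p.2.1 (by simpa using hasDerivAt_ly p.1 p.2.2 p.2.1))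
  exact this

lemma py_eq {u : ℝ × ℝ × ℝ → ℝ} {p : ℝ × ℝ × ℝ} (hu : DifferentiableAt ℝ u p) :
    py u p = fderiv ℝ u p (0,1,0) := (py_hasDerivAt' hu).deriv

lemma py_slice_hasDerivAt {u : ℝ × ℝ × ℝ → ℝ} {p : ℝ × ℝ × ℝ} (hu : DifferentiableAt ℝ u p) :
    HasDerivAt (fun s => u (p.1, s, p.2.2)) (py u p) p.2.1 := by
  have := py_hasDerivAt' hu; rwa [← py_eq hu] at this

lemma pt_hasDerivAt' {u : ℝ × ℝ × ℝ → ℝ} {p : ℝ × ℝ × ℝ} (hu : DifferentiableAt ℝ u p) :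
    HasDerivAt (fun s => u (p.1, p.2.1, s)) (fderiv ℝ u p (0,0,1)) p.2.2 := by
  have := (hu.hasFDerivAt.comp_hasDerivAt p.2.2 (by simpa using hasDerivAt_lt p.1 p.2.1 p.2.2))
  exact this

lemma pt_eq {u : ℝ × ℝ × ℝ → ℝ} {p : ℝ × ℝ × ℝ} (hu : DifferentiableAt ℝ u p) :
    pt u p = fderiv ℝ u p (0,0,1) := (pt_hasDerivAt' hu).deriv

lemma pt_slice_hasDerivAt {u : ℝ × ℝ × ℝ → ℝ} {p : ℝ × ℝ × ℝ} (hu : DifferentiableAt ℝ u p) :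
    HasDerivAt (fun s => u (p.1, p.2.1, s)) (pt u p) p.2.2 := by
  have := pt_hasDerivAt' hu; rwa [← pt_eq hu] at this

lemma dirDeriv_contDiff {u : ℝ × ℝ × ℝ → ℝ} {n m : ℕ} (hu : ContDiff ℝ n u) (hnm : m + 1 ≤ n)
    (w : ℝ × ℝ × ℝ) : ContDiff ℝ m (fun p => fderiv ℝ u p w) :=
  (hu.fderiv_right (by exact_mod_cast hnm)).clm_apply contDiff_const

lemma px_eq_fun {u : ℝ × ℝ × ℝ → ℝ} (hu : Differentiable ℝ u) :
    px u = fun p => fderiv ℝ u p (1,0,0) := funext fun p => px_eq (hu p)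
lemma py_eq_fun {u : ℝ × ℝ × ℝ → ℝ} (hu : Differentiable ℝ u) :
    py u = fun p => fderiv ℝ u p (0,1,0) := funext fun p => py_eq (hu p)
lemma pt_eq_fun {u : ℝ × ℝ × ℝ → ℝ} (hu : Differentiable ℝ u) :
    pt u = fun p => fderiv ℝ u p (0,0,1) := funext fun p => pt_eq (hu p)

lemma px_contDiff {u : ℝ × ℝ × ℝ → ℝ} {n m : ℕ} (hu : ContDiff ℝ n u) (hnm : m + 1 ≤ n) :
    ContDiff ℝ m (px u) := by
  rw [px_eq_fun (hu.differentiable (by have := le_trans (Nat.le_add_left 1 m) hnm; exact_mod_cast (show n ≠ 0 by omega)))]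
  exact dirDeriv_contDiff hu hnm _

lemma py_contDiff {u : ℝ × ℝ × ℝ → ℝ} {n m : ℕ} (hu : ContDiff ℝ n u) (hnm : m + 1 ≤ n) :
    ContDiff ℝ m (py u) := by
  rw [py_eq_fun (hu.differentiable (by have := le_trans (Nat.le_add_left 1 m) hnm; exact_mod_cast (show n ≠ 0 by omega)))]
  exact dirDeriv_contDiff hu hnm _

/-- Clairaut: `∂ₜ∂ₓ = ∂ₓ∂ₜ` for `C²` functions. -/
lemma pt_px_comm {u : ℝ × ℝ × ℝ → ℝ} (hu : ContDiff ℝ 2 u) (p : ℝ × ℝ × ℝ) :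
    pt (px u) p = px (pt u) p := by
  have hdu : Differentiable ℝ u := hu.differentiable (by norm_num)
  have hfd : Differentiable ℝ (fderiv ℝ u) :=
    (hu.fderiv_right (m := 1) (by norm_num)).differentiable (by norm_num)
  have key : ∀ w w' : ℝ × ℝ × ℝ, fderiv ℝ (fun q => fderiv ℝ u q w) p w' =
      fderiv ℝ (fderiv ℝ u) p w' w := by
    intro w w'
    rw [fderiv_clm_apply (hfd p) (differentiableAt_const w)]
    simp
  have hsymm : fderiv ℝ (fderiv ℝ u) p ((0:ℝ),(0:ℝ),(1:ℝ)) (1,0,0)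
      = fderiv ℝ (fderiv ℝ u) p (1,0,0) (0,0,1) :=
    (hu.contDiffAt.isSymmSndFDerivAt (by norm_num)) _ _
  calc pt (px u) p = fderiv ℝ (px u) p (0,0,1) :=
        pt_eq ((px_contDiff (m := 1) hu (by norm_num)).differentiable (by norm_num) p)
    _ = fderiv ℝ (fun q => fderiv ℝ u q (1,0,0)) p (0,0,1) := by rw [px_eq_fun hdu]
    _ = fderiv ℝ (fderiv ℝ u) p (0,0,1) (1,0,0) := key _ _
    _ = fderiv ℝ (fderiv ℝ u) p (1,0,0) (0,0,1) := hsymm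
    _ = fderiv ℝ (fun q => fderiv ℝ u q (0,0,1)) p (1,0,0) := (key _ _).symm
    _ = fderiv ℝ (pt u) p (1,0,0) := by
        rw [show pt u = fun q => fderiv ℝ u q (0,0,1) from funext fun q => pt_eq (hdu q)]
    _ = px (pt u) p := by
        have hptd : DifferentiableAt ℝ (pt u) p := by
          rw [show pt u = fun q => fderiv ℝ u q (0,0,1) from funext fun q => pt_eq (hdu q)]
          exact ((dirDeriv_contDiff (m := 1) hu (by norm_num)) (0,0,1)).differentiable (by norm_num) p
        exact (px_eq hptd).symm

/-- Clairaut: `∂ₜ∂ᵧ = ∂ᵧ∂ₜ` for `C²` functions. -/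
lemma pt_py_comm {u : ℝ × ℝ × ℝ → ℝ} (hu : ContDiff ℝ 2 u) (p : ℝ × ℝ × ℝ) :
    pt (py u) p = py (pt u) p := by
  have hdu : Differentiable ℝ u := hu.differentiable (by norm_num)
  have hfd : Differentiable ℝ (fderiv ℝ u) :=
    (hu.fderiv_right (m := 1) (by norm_num)).differentiable (by norm_num)
  have key : ∀ w w' : ℝ × ℝ × ℝ, fderiv ℝ (fun q => fderiv ℝ u q w) p w' =
      fderiv ℝ (fderiv ℝ u) p w' w := by
    intro w w'
    rw [fderiv_clm_apply (hfd p) (differentiableAt_const w)]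
    simp
  have hsymm : fderiv ℝ (fderiv ℝ u) p ((0:ℝ),(0:ℝ),(1:ℝ)) (0,1,0)
      = fderiv ℝ (fderiv ℝ u) p (0,1,0) (0,0,1) :=
    (hu.contDiffAt.isSymmSndFDerivAt (by norm_num)) _ _
  calc pt (py u) p = fderiv ℝ (py u) p (0,0,1) :=
        pt_eq ((py_contDiff (m := 1) hu (by norm_num)).differentiable (by norm_num) p)
    _ = fderiv ℝ (fun q => fderiv ℝ u q (0,1,0)) p (0,0,1) := by rw [py_eq_fun hdu]
    _ = fderiv ℝ (fderiv ℝ u) p (0,0,1) (0,1,0) := key _ _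
    _ = fderiv ℝ (fderiv ℝ u) p (0,1,0) (0,0,1) := hsymm
    _ = fderiv ℝ (fun q => fderiv ℝ u q (0,0,1)) p (0,1,0) := (key _ _).symm
    _ = fderiv ℝ (pt u) p (0,1,0) := by
        rw [show pt u = fun q => fderiv ℝ u q (0,0,1) from funext fun q => pt_eq (hdu q)]
    _ = py (pt u) p := by
        have hptd : DifferentiableAt ℝ (pt u) p := by
          rw [show pt u = fun q => fderiv ℝ u q (0,0,1) from funext fun q => pt_eq (hdu q)]
          exact ((dirDeriv_contDiff (m := 1) hu (by norm_num)) (0,0,1)).differentiable (by norm_num) p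
        exact (py_eq hptd).symm

lemma swap_le {F : ℝ → ℝ → ℝ} (hF : Continuous (Function.uncurry F))
    {a₁ a₂ b₁ b₂ : ℝ} (ha : a₁ ≤ a₂) (hb : b₁ ≤ b₂) :
    (∫ a in a₁..a₂, ∫ b in b₁..b₂, F a b) = ∫ b in b₁..b₂, ∫ a in a₁..a₂, F a b := by
  rw [intervalIntegral.integral_of_le ha, intervalIntegral.integral_of_le hb]
  simp_rw [intervalIntegral.integral_of_le hb, intervalIntegral.integral_of_le ha]
  have hint : Integrable (Function.uncurry F)
      ((volume.restrict (Set.Ioc a₁ a₂)).prod (volume.restrict (Set.Ioc b₁ b₂))) := by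
    rw [Measure.prod_restrict]
    exact (hF.continuousOn.integrableOn_compact (isCompact_Icc.prod isCompact_Icc)).mono_set
      (Set.prod_mono Set.Ioc_subset_Icc_self Set.Ioc_subset_Icc_self)
  exact (MeasureTheory.integral_integral_swap hint)

lemma swap_cont {F : ℝ → ℝ → ℝ} (hF : Continuous (Function.uncurry F))
    (a₁ a₂ b₁ b₂ : ℝ) :
    (∫ a in a₁..a₂, ∫ b in b₁..b₂, F a b) = ∫ b in b₁..b₂, ∫ a in a₁..a₂, F a b := by
  rcases le_total a₁ a₂ with ha | ha <;> rcases le_total b₁ b₂ with hb | hb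
  · exact swap_le hF ha hb
  · rw [intervalIntegral.integral_symm b₂ b₁]
    simp_rw [intervalIntegral.integral_symm b₂ b₁]
    rw [intervalIntegral.integral_neg, swap_le hF ha hb]
  · rw [intervalIntegral.integral_symm a₂ a₁]
    simp_rw [intervalIntegral.integral_symm a₂ a₁]
    rw [swap_le hF ha hb, intervalIntegral.integral_neg]
  · rw [intervalIntegral.integral_symm a₂ a₁, intervalIntegral.integral_symm b₂ b₁]
    simp_rw [intervalIntegral.integral_symm b₂ b₁, intervalIntegral.integral_symm a₂ a₁]
    rw [intervalIntegral.integral_neg, intervalIntegral.integral_neg, swap_le hF ha hb]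

end Helpers

theorem IEQ_system_modified_global_energy_conservation
    (L₁ L₂ : ℝ) (hL₁ : 0 < L₁) (hL₂ : 0 < L₂)
    (u v r : ℝ × ℝ × ℝ → ℝ)
    (hu : ContDiff ℝ 2 u) (hv : ContDiff ℝ 1 v) (hr : ContDiff ℝ 1 r)
    (h1 : ∀ p : ℝ × ℝ × ℝ, pt u p = v p)
    (h2 : ∀ p : ℝ × ℝ × ℝ,
      pt v p = px (px u) p + py (py u) p - b (u p) * r p)
    (h3 : ∀ p : ℝ × ℝ × ℝ, pt r p = (1/2) * b (u p) * v p)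
    (hpu : SpatiallyPeriodic L₁ L₂ u)
    (hpv : SpatiallyPeriodic L₁ L₂ v)
    (hpr : SpatiallyPeriodic L₁ L₂ r)
    (E : ℝ → ℝ)
    (hE : ∀ t : ℝ, E t = ∫ x in (0:ℝ)..L₁, ∫ y in (0:ℝ)..L₂,
      (1/2) * ((v (x, y, t))^2 + (px u (x, y, t))^2 + (py u (x, y, t))^2
        + 2 * (r (x, y, t))^2)) :
    ∀ t : ℝ, E t = E 0 := by
  classical
  intro t
  -- basic differentiability and continuity facts
  have hpxuC1 : ContDiff ℝ 1 (px u) := px_contDiff (m := 1) hu (by norm_num)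
  have hpyuC1 : ContDiff ℝ 1 (py u) := py_contDiff (m := 1) hu (by norm_num)
  have hdv : Differentiable ℝ v := hv.differentiable (by norm_num)
  have hdr : Differentiable ℝ r := hr.differentiable (by norm_num)
  have hdpxu : Differentiable ℝ (px u) := hpxuC1.differentiable (by norm_num)
  have hdpyu : Differentiable ℝ (py u) := hpyuC1.differentiable (by norm_num)
  -- energy density and flux terms
  set e : ℝ × ℝ × ℝ → ℝ := fun p =>
    (1/2) * ((v p)^2 + (px u p)^2 + (py u p)^2 + 2 * (r p)^2) with he_def
  set g₁ : ℝ × ℝ × ℝ → ℝ := px (fun q => v q * px u q) with hg₁_def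
  set g₂ : ℝ × ℝ × ℝ → ℝ := py (fun q => v q * py u q) with hg₂_def
  have hprod₁C1 : ContDiff ℝ 1 (fun q => v q * px u q) := hv.mul hpxuC1
  have hprod₂C1 : ContDiff ℝ 1 (fun q => v q * py u q) := hv.mul hpyuC1
  have ce : Continuous e := by
    apply Continuous.mul continuous_const
    exact (((hv.continuous.pow 2).add (hpxuC1.continuous.pow 2)).add
      (hpyuC1.continuous.pow 2)).add (continuous_const.mul (hr.continuous.pow 2))
  have cg₁ : Continuous g₁ := by
    rw [hg₁_def]
    exact (px_contDiff (m := 0) hprod₁C1 le_rfl).continuous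
  have cg₂ : Continuous g₂ := by
    rw [hg₂_def]
    exact (py_contDiff (m := 0) hprod₂C1 le_rfl).continuous
  -- product rule for the fluxes
  have hg₁slice : ∀ p : ℝ × ℝ × ℝ,
      HasDerivAt (fun s => v (s, p.2.1, p.2.2) * px u (s, p.2.1, p.2.2))
        (px v p * px u p + v p * px (px u) p) p.1 :=
    fun p => (px_slice_hasDerivAt (hdv p)).mul (px_slice_hasDerivAt (hdpxu p))
  have hg₁val : ∀ p : ℝ × ℝ × ℝ, g₁ p = px v p * px u p + v p * px (px u) p :=
    fun p => (hg₁slice p).deriv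
  have hg₁slice' : ∀ p : ℝ × ℝ × ℝ,
      HasDerivAt (fun s => v (s, p.2.1, p.2.2) * px u (s, p.2.1, p.2.2)) (g₁ p) p.1 :=
    fun p => (hg₁val p) ▸ hg₁slice p
  have hg₂slice : ∀ p : ℝ × ℝ × ℝ,
      HasDerivAt (fun s => v (p.1, s, p.2.2) * py u (p.1, s, p.2.2))
        (py v p * py u p + v p * py (py u) p) p.2.1 :=
    fun p => (py_slice_hasDerivAt (hdv p)).mul (py_slice_hasDerivAt (hdpyu p))
  have hg₂val : ∀ p : ℝ × ℝ × ℝ, g₂ p = py v p * py u p + v p * py (py u) p :=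
    fun p => (hg₂slice p).deriv
  have hg₂slice' : ∀ p : ℝ × ℝ × ℝ,
      HasDerivAt (fun s => v (p.1, s, p.2.2) * py u (p.1, s, p.2.2)) (g₂ p) p.2.1 :=
    fun p => (hg₂val p) ▸ hg₂slice p
  -- mixed partials
  have hmix₁ : ∀ p : ℝ × ℝ × ℝ, pt (px u) p = px v p := by
    intro p
    rw [pt_px_comm hu p, show pt u = v from funext h1]
  have hmix₂ : ∀ p : ℝ × ℝ × ℝ, pt (py u) p = py v p := by
    intro p
    rw [pt_py_comm hu p, show pt u = v from funext h1]
  -- time derivative of the energy density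
  have hD : ∀ p : ℝ × ℝ × ℝ,
      HasDerivAt (fun s => e (p.1, p.2.1, s)) (g₁ p + g₂ p) p.2.2 := by
    intro p
    have hvs := pt_slice_hasDerivAt (hdv p)
    have hrs := pt_slice_hasDerivAt (hdr p)
    have hpxs := pt_slice_hasDerivAt (hdpxu p)
    have hpys := pt_slice_hasDerivAt (hdpyu p)
    have H := ((((hvs.pow 2).add (hpxs.pow 2)).add (hpys.pow 2)).add
      ((hrs.pow 2).const_mul 2)).const_mul (1/2 : ℝ)
    refine H.congr_deriv ?_
    rw [hg₁val p, hg₂val p, hmix₁ p, hmix₂ p, h2 p, h3 p]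
    ring
  -- spatial flux integrals vanish by periodicity
  have E1 : ∀ y t' : ℝ, (∫ x in (0:ℝ)..L₁, g₁ (x, y, t')) = 0 := by
    intro y t'
    have hint : IntervalIntegrable (fun x => g₁ (x, y, t')) MeasureTheory.volume 0 L₁ :=
      (cg₁.comp (by fun_prop : Continuous fun x : ℝ => ((x, y, t') : ℝ × ℝ × ℝ))).intervalIntegrable 0 L₁
    have key := intervalIntegral.integral_eq_sub_of_hasDerivAt
      (f := fun x => v (x, y, t') * px u (x, y, t')) (f' := fun x => g₁ (x, y, t'))
      (fun x _ => hg₁slice' (x, y, t')) hint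
    rw [key]
    have pv : v (L₁, y, t') = v (0, y, t') := by
      have := (hpv 0 y t').1; simpa using this
    have hdu : Differentiable ℝ u := hu.differentiable (by norm_num)
    have ppx : px u (L₁, y, t') = px u (0, y, t') := by
      have H1 : HasDerivAt (fun s => u (s, y, t')) (px u (L₁, y, t')) L₁ :=
        px_slice_hasDerivAt (hdu (L₁, y, t'))
      have H2 : HasDerivAt ((fun s => u (s, y, t')) ∘ (fun s : ℝ => s + L₁))
          (px u (L₁, y, t') * 1) 0 :=
        by
          have H1' : HasDerivAt (fun s => u (s, y, t')) (px u (L₁, y, t')) (0 + L₁) := by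
            rw [zero_add]; exact H1
          exact H1'.comp 0 ((hasDerivAt_id (0:ℝ)).add_const L₁)
      have hcomp : ((fun s => u (s, y, t')) ∘ (fun s : ℝ => s + L₁)) = fun s => u (s, y, t') := by
        funext s; exact (hpu s y t').1
      rw [hcomp] at H2
      have H3 : HasDerivAt (fun s => u (s, y, t')) (px u (0, y, t')) 0 :=
        px_slice_hasDerivAt (hdu (0, y, t'))
      have := H2.unique H3
      rw [mul_one] at this
      exact this
    simp only [pv, ppx, sub_self]
  have E2 : ∀ x t' : ℝ, (∫ y in (0:ℝ)..L₂, g₂ (x, y, t')) = 0 := by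
    intro x t'
    have hint : IntervalIntegrable (fun y => g₂ (x, y, t')) MeasureTheory.volume 0 L₂ :=
      (cg₂.comp (by fun_prop : Continuous fun y : ℝ => ((x, y, t') : ℝ × ℝ × ℝ))).intervalIntegrable 0 L₂
    have key := intervalIntegral.integral_eq_sub_of_hasDerivAt
      (f := fun y => v (x, y, t') * py u (x, y, t')) (f' := fun y => g₂ (x, y, t'))
      (fun y _ => hg₂slice' (x, y, t')) hint
    rw [key]
    have pv : v (x, L₂, t') = v (x, 0, t') := by
      have := (hpv x 0 t').2; simpa using this
    have hdu : Differentiable ℝ u := hu.differentiable (by norm_num)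
    have ppy : py u (x, L₂, t') = py u (x, 0, t') := by
      have H1 : HasDerivAt (fun s => u (x, s, t')) (py u (x, L₂, t')) L₂ :=
        py_slice_hasDerivAt (hdu (x, L₂, t'))
      have H2 : HasDerivAt ((fun s => u (x, s, t')) ∘ (fun s : ℝ => s + L₂))
          (py u (x, L₂, t') * 1) 0 :=
        by
          have H1' : HasDerivAt (fun s => u (x, s, t')) (py u (x, L₂, t')) (0 + L₂) := by
            rw [zero_add]; exact H1
          exact H1'.comp 0 ((hasDerivAt_id (0:ℝ)).add_const L₂)
      have hcomp : ((fun s => u (x, s, t')) ∘ (fun s : ℝ => s + L₂)) = fun s => u (x, s, t') := by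
        funext s; exact (hpu x s t').2
      rw [hcomp] at H2
      have H3 : HasDerivAt (fun s => u (x, s, t')) (py u (x, 0, t')) 0 :=
        py_slice_hasDerivAt (hdu (x, 0, t'))
      have := H2.unique H3
      rw [mul_one] at this
      exact this
    simp only [pv, ppy, sub_self]
  -- parametric continuity
  have c1 : Continuous fun q : ℝ × ℝ => ∫ t' in (0:ℝ)..t, g₁ (q.1, q.2, t') := by
    apply intervalIntegral.continuous_parametric_intervalIntegral_of_continuous'
    exact cg₁.comp (by fun_prop)
  have c2 : Continuous fun q : ℝ × ℝ => ∫ t' in (0:ℝ)..t, g₂ (q.1, q.2, t') := by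
    apply intervalIntegral.continuous_parametric_intervalIntegral_of_continuous'
    exact cg₂.comp (by fun_prop)
  -- Fundamental theorem of calculus in time, for each (x, y)
  have hFTC : ∀ x y : ℝ, e (x, y, t) - e (x, y, 0)
      = (∫ t' in (0:ℝ)..t, g₁ (x, y, t')) + ∫ t' in (0:ℝ)..t, g₂ (x, y, t') := by
    intro x y
    have hint : IntervalIntegrable (fun t' => g₁ (x, y, t') + g₂ (x, y, t'))
        MeasureTheory.volume 0 t :=
      ((cg₁.comp (by fun_prop : Continuous fun t' : ℝ => ((x, y, t') : ℝ × ℝ × ℝ))).add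
        (cg₂.comp (by fun_prop))).intervalIntegrable 0 t
    have key := intervalIntegral.integral_eq_sub_of_hasDerivAt
      (f := fun s => e (x, y, s)) (f' := fun t' => g₁ (x, y, t') + g₂ (x, y, t'))
      (fun t' _ => hD (x, y, t')) hint
    rw [← key]
    have i1 : IntervalIntegrable (fun t' : ℝ => g₁ (x, y, t')) MeasureTheory.volume 0 t :=
      (cg₁.comp (by fun_prop : Continuous fun t' : ℝ => ((x, y, t') : ℝ × ℝ × ℝ))).intervalIntegrable 0 t
    have i2 : IntervalIntegrable (fun t' : ℝ => g₂ (x, y, t')) MeasureTheory.volume 0 t :=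
      (cg₂.comp (by fun_prop : Continuous fun t' : ℝ => ((x, y, t') : ℝ × ℝ × ℝ))).intervalIntegrable 0 t
    exact intervalIntegral.integral_add i1 i2
  -- main computation
  have main : E t - E 0 = 0 := by
    have cA : ∀ τ : ℝ, Continuous fun x => ∫ y in (0:ℝ)..L₂, e (x, y, τ) := by
      intro τ
      apply intervalIntegral.continuous_parametric_intervalIntegral_of_continuous'
      exact ce.comp (by fun_prop)
    rw [hE t, hE 0]
    rw [← intervalIntegral.integral_sub ((cA t).intervalIntegrable 0 L₁)
      ((cA 0).intervalIntegrable 0 L₁)]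
    have step : ∀ x : ℝ,
        ((∫ y in (0:ℝ)..L₂, e (x, y, t)) - ∫ y in (0:ℝ)..L₂, e (x, y, 0))
        = ∫ y in (0:ℝ)..L₂, ∫ t' in (0:ℝ)..t, g₁ (x, y, t') := by
      intro x
      have j1 : IntervalIntegrable (fun y : ℝ => e (x, y, t)) MeasureTheory.volume 0 L₂ :=
        (ce.comp (by fun_prop : Continuous fun y : ℝ => ((x, y, t) : ℝ × ℝ × ℝ))).intervalIntegrable 0 L₂
      have j2 : IntervalIntegrable (fun y : ℝ => e (x, y, 0)) MeasureTheory.volume 0 L₂ :=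
        (ce.comp (by fun_prop : Continuous fun y : ℝ => ((x, y, 0) : ℝ × ℝ × ℝ))).intervalIntegrable 0 L₂
      rw [← intervalIntegral.integral_sub j1 j2]
      have : (∫ y in (0:ℝ)..L₂, (e (x, y, t) - e (x, y, 0)))
          = ∫ y in (0:ℝ)..L₂,
            ((∫ t' in (0:ℝ)..t, g₁ (x, y, t')) + ∫ t' in (0:ℝ)..t, g₂ (x, y, t')) :=
        intervalIntegral.integral_congr (fun y _ => hFTC x y)
      rw [this]
      have k1 : IntervalIntegrable (fun y : ℝ => ∫ t' in (0:ℝ)..t, g₁ (x, y, t'))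
          MeasureTheory.volume 0 L₂ :=
        (c1.comp (by fun_prop : Continuous fun y : ℝ => ((x, y) : ℝ × ℝ))).intervalIntegrable 0 L₂
      have k2 : IntervalIntegrable (fun y : ℝ => ∫ t' in (0:ℝ)..t, g₂ (x, y, t'))
          MeasureTheory.volume 0 L₂ :=
        (c2.comp (by fun_prop : Continuous fun y : ℝ => ((x, y) : ℝ × ℝ))).intervalIntegrable 0 L₂
      rw [intervalIntegral.integral_add k1 k2]
      have hzero : (∫ y in (0:ℝ)..L₂, ∫ t' in (0:ℝ)..t, g₂ (x, y, t')) = 0 := by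
        rw [swap_cont (F := fun y t' => g₂ (x, y, t')) (cg₂.comp (by fun_prop)) 0 L₂ 0 t]
        simp_rw [E2]
        simp
      rw [hzero, add_zero]
    rw [intervalIntegral.integral_congr (fun x _ => step x)]
    rw [swap_cont (F := fun x y => ∫ t' in (0:ℝ)..t, g₁ (x, y, t')) c1 0 L₁ 0 L₂]
    have hinner : ∀ y : ℝ, (∫ x in (0:ℝ)..L₁, ∫ t' in (0:ℝ)..t, g₁ (x, y, t')) = 0 := by
      intro y
      rw [swap_cont (F := fun x t' => g₁ (x, y, t')) (cg₁.comp (by fun_prop)) 0 L₁ 0 t]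
      simp_rw [E1]
      simp
    rw [intervalIntegral.integral_congr (fun y _ => hinner y)]
    simp
  linarith
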